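/- arXiv:2202.07961 — 5 statements merged into one kernel-verified Lean document; each statement's English description precedes it below -/
import Mathlib

section
/- Let a_1,…,a_k be pairwise coprime positive integers and d_1,…,d_k positive integers such that, for each i, the polynomial X^{d_i} − a_i is irreducible over ℚ, and let d = lcm(d_1,…,d_k). Let f ∈ ℤ[x_1,…,x_k]. Suppose there exist a rational prime p with p ≡ 1 (mod d) and p not dividing any a_i, and elements ᾱ_1,…,ᾱ_k ∈ F_p with ᾱ_i^{d_i} = a_i in F_p for all i, such that f̄(ᾱ_1,…,ᾱ_k) ≠ 0 in F_p, where f̄ is the coefficientwise reduction of f modulo p. Then f(d_1√a_1, …, d_k√a_k) ≠ 0. -/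
set_option maxHeartbeats 1000000

open Polynomial

open IntermediateField


theorem real_X_pow_sub_C_irreducible :
    ∀ (n : ℕ), n ≠ 0 → ∀ (F : Type) [Field F] [Algebra F ℝ] (c : F),
      0 < algebraMap F ℝ c →
      (∀ ℓ : ℕ, ℓ.Prime → ℓ ∣ n → ∀ b : F, b ^ ℓ ≠ c) →
      Irreducible (X ^ n - C c) := by
  intro n
  induction n using induction_on_primes with
  | zero => intro h; exact absurd rfl h
  | one => intro _ F _ _ c _ _; simpa using irreducible_X_sub_C c
  | prime_mul p m hp IH =>
    intro hpm F _ _ c hc H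
    have hm : m ≠ 0 := by rintro rfl; exact hpm (mul_zero p)
    rw [mul_comm]
    apply X_pow_mul_sub_C_irreducible
      (X_pow_sub_C_irreducible_of_prime hp (H p hp (dvd_mul_right p m)))
    intro E _ _ x hx
    set ρ : ℝ := (algebraMap F ℝ c) ^ ((p : ℝ)⁻¹) with hρ_def
    have hρ_pos : 0 < ρ := Real.rpow_pos_of_pos hc _
    have hρ_pow : ρ ^ p = algebraMap F ℝ c :=
      Real.rpow_inv_natCast_pow hc.le hp.ne_zero
    have hirr_p : Irreducible (X ^ p - C c) :=
      X_pow_sub_C_irreducible_of_prime hp (H p hp (dvd_mul_right p m))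
    have hρ_min : minpoly F ρ = X ^ p - C c := by
      refine (minpoly.eq_of_irreducible_of_monic hirr_p ?_ ?_).symm
      · simp [hρ_pow]
      · exact monic_X_pow_sub_C c hp.ne_zero
    have hx_int : IsIntegral F x := not_not.mp fun h ↦ by
      simpa only [degree_zero, degree_X_pow_sub_C hp.pos,
        WithBot.natCast_ne_bot] using congr_arg degree (hx.symm.trans (dif_neg h))
    have hρ_int : IsIntegral F ρ := not_not.mp fun h ↦ by
      simpa only [degree_zero, degree_X_pow_sub_C hp.pos,
        WithBot.natCast_ne_bot] using congr_arg degree (hρ_min.symm.trans (dif_neg h))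
    have hmin_eq : minpoly F (adjoin.powerBasis hx_int).gen
        = minpoly F (adjoin.powerBasis hρ_int).gen := by
      rw [adjoin.powerBasis_gen, adjoin.powerBasis_gen, minpoly_gen, minpoly_gen, hx, hρ_min]
    set e : F⟮x⟯ ≃ₐ[F] F⟮ρ⟯ :=
      (adjoin.powerBasis hx_int).equivOfMinpoly (adjoin.powerBasis hρ_int) hmin_eq with he_def
    have he_gen : e (AdjoinSimple.gen F x) = AdjoinSimple.gen F ρ := by
      have h1 := (adjoin.powerBasis hx_int).equivOfMinpoly_gen (adjoin.powerBasis hρ_int) hmin_eq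
      rw [adjoin.powerBasis_gen, adjoin.powerBasis_gen] at h1
      exact h1
    haveI : FiniteDimensional F F⟮ρ⟯ := adjoin.finiteDimensional hρ_int
    have key : Irreducible (X ^ m - C (AdjoinSimple.gen F ρ)) := by
      apply IH hm F⟮ρ⟯ (AdjoinSimple.gen F ρ)
      · rwa [IntermediateField.algebraMap_apply, AdjoinSimple.coe_gen]
      · intro q hq hqm b hb
        have hnorm : (Algebra.norm F b) ^ q = Algebra.norm F (AdjoinSimple.gen F ρ) := by
          rw [← map_pow, hb]
        have hgen : Algebra.norm F (AdjoinSimple.gen F ρ) = (-1) ^ p * (-c) := by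
          have h0 := Algebra.PowerBasis.norm_gen_eq_coeff_zero_minpoly
            (adjoin.powerBasis hρ_int)
          rw [adjoin.powerBasis_gen, minpoly_gen, hρ_min] at h0
          have hdim : (adjoin.powerBasis hρ_int).dim = p := by
            have h2 := (adjoin.powerBasis hρ_int).natDegree_minpoly
            rw [adjoin.powerBasis_gen, minpoly_gen, hρ_min, natDegree_X_pow_sub_C] at h2
            omega
          rw [h0, hdim]
          have : ¬ (0 = p) := fun h => hp.ne_zero h.symm
          simp [coeff_X_pow, this]
        set β := Algebra.norm F b with hβ_def
        rcases hp.eq_two_or_odd' with hp2 | hpodd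
        · subst hp2
          have hβq : β ^ q = -c := by
            rw [hnorm, hgen]; ring
          rcases hq.eq_two_or_odd' with hq2 | hqodd
          · subst hq2
            have := congrArg (algebraMap F ℝ) hβq
            rw [map_pow, map_neg] at this
            have h1 : (0:ℝ) ≤ (algebraMap F ℝ β) ^ 2 := sq_nonneg _
            rw [this] at h1
            linarith
          · exact H q hq (hqm.mul_left 2) (-β)
              (by rw [hqodd.neg_pow, hβq, neg_neg])
        · have hβq : β ^ q = c := by
            rw [hnorm, hgen, hpodd.neg_one_pow]; ring
          exact H q hq (hqm.mul_left p) β hβq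
    -- transfer back along e
    have h3 : Irreducible (Polynomial.mapEquiv e.symm.toRingEquiv (X ^ m - C (AdjoinSimple.gen F ρ))) :=
      (MulEquiv.irreducible_iff (Polynomial.mapEquiv e.symm.toRingEquiv)).mpr key
    have h4 : Polynomial.mapEquiv e.symm.toRingEquiv (X ^ m - C (AdjoinSimple.gen F ρ))
        = X ^ m - C (AdjoinSimple.gen F x) := by
      rw [Polynomial.mapEquiv_apply, Polynomial.map_sub, Polynomial.map_pow, map_X, map_C]
      congr 1
      congr 1
      exact (AlgEquiv.symm_apply_eq e).mpr he_gen.symm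
    rwa [h4] at h3

open IntermediateField in
theorem trace_eq_zero_of_radical (L : IntermediateField ℚ ℝ) [FiniteDimensional ℚ ↥L] (x : ↥L)
    (hx0 : 0 < (x : ℝ)) (N : ℕ) (hN : N ≠ 0) (q0 : ℚ) (hxq : (x : ℝ) ^ N = (q0 : ℝ))
    (hxirr : ∀ s : ℚ, (x : ℝ) ≠ (s : ℝ)) : Algebra.trace ℚ (↥L) x = 0 := by
  classical
  have hP : ∃ m : ℕ, m ≠ 0 ∧ ∃ s : ℚ, (x : ℝ) ^ m = (s : ℝ) := ⟨N, hN, q0, hxq⟩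
  obtain ⟨m, ⟨hm0, c, hc⟩, hmin'⟩ :
      ∃ m : ℕ, (m ≠ 0 ∧ ∃ s : ℚ, (x : ℝ) ^ m = (s : ℝ)) ∧
        ∀ m' : ℕ, m' < m → ¬(m' ≠ 0 ∧ ∃ s : ℚ, (x : ℝ) ^ m' = (s : ℝ)) :=
    ⟨Nat.find hP, Nat.find_spec hP, fun m' h => Nat.find_min hP h⟩
  have hc_pos : 0 < c := by
    have : (0:ℝ) < (c:ℝ) := hc ▸ pow_pos hx0 m
    exact_mod_cast this
  have hm1 : m ≠ 1 := by
    intro h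
    rw [h, pow_one] at hc
    exact hxirr c hc
  have hm2 : 2 ≤ m := by
    rcases Nat.lt_or_ge m 2 with h | h
    · interval_cases m <;> simp_all
    · exact h
  have hirr : Irreducible (X ^ m - C c) := by
    apply real_X_pow_sub_C_irreducible m hm0 ℚ c
    · rw [show (algebraMap ℚ ℝ) c = (c:ℝ) from eq_ratCast _ c, ← hc]
      exact pow_pos hx0 m
    · intro ℓ hℓ hℓm b hb
      have hℓ0 : ℓ ≠ 0 := hℓ.ne_zero
      have hm'ℓ : m / ℓ * ℓ = m := Nat.div_mul_cancel hℓm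
      have hm'0 : m / ℓ ≠ 0 := by
        intro h; rw [h, zero_mul] at hm'ℓ; exact hm0 hm'ℓ.symm
      have hm'lt : m / ℓ < m := by
        have h2 : 2 ≤ ℓ := hℓ.two_le
        have := Nat.pos_of_ne_zero hm'0
        nlinarith [hm'ℓ]
      have hkey : (x : ℝ) ^ (m / ℓ) = ((|b| : ℚ) : ℝ) := by
        have habs : (|b| : ℚ) ^ ℓ = c := by rw [← abs_pow, hb, abs_of_pos hc_pos]
        have h1 : ((x : ℝ) ^ (m / ℓ)) ^ ℓ = (((|b| : ℚ) : ℝ)) ^ ℓ := by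
          rw [← pow_mul, hm'ℓ, hc, ← habs]
          push_cast
          ring
        have h2 : (0:ℝ) ≤ (x:ℝ) ^ (m / ℓ) := (pow_pos hx0 _).le
        have h3 : (0:ℝ) ≤ ((|b| : ℚ) : ℝ) := by positivity
        exact (pow_left_strictMonoOn₀ hℓ0).injOn h2 h3 h1
      exact hmin' _ hm'lt ⟨hm'0, |b|, hkey⟩
  have hcast : ((algebraMap ℚ (↥L) c : ↥L) : ℝ) = (c : ℝ) := by
    have : ((algebraMap ℚ (↥L) c : ↥L) : ℝ) = algebraMap ℚ ℝ c := by
      rw [← IntermediateField.algebraMap_apply, ← IsScalarTower.algebraMap_apply]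
    rw [this, eq_ratCast]
  have haev : (Polynomial.aeval x) (X ^ m - C c) = 0 := by
    have h0 : ((x ^ m - algebraMap ℚ (↥L) c : ↥L) : ℝ) = 0 := by
      push_cast
      rw [hcast, hc, sub_self]
    have h4 : (x ^ m - algebraMap ℚ (↥L) c : ↥L) = 0 := by
      exact_mod_cast h0
    simpa using h4
  have hmin : minpoly ℚ x = X ^ m - C c :=
    (minpoly.eq_of_irreducible_of_monic hirr haev (monic_X_pow_sub_C c hm0)).symm
  rw [trace_eq_trace_adjoin ℚ x]
  have hxint : IsIntegral ℚ x := IsIntegral.of_finite ℚ x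
  have htr : Algebra.trace ℚ (↥ℚ⟮x⟯) (AdjoinSimple.gen ℚ x) = 0 := by
    have h5 := (adjoin.powerBasis hxint).trace_gen_eq_nextCoeff_minpoly
    rw [adjoin.powerBasis_gen, minpoly_gen, hmin] at h5
    refine h5.trans ?_
    have h6 : (X ^ m - C c).nextCoeff = 0 := by
      have hnd : (X ^ m - C c).natDegree = m := natDegree_X_pow_sub_C
      rw [nextCoeff_of_natDegree_pos (by rw [hnd]; omega), hnd,
        coeff_sub, coeff_X_pow, coeff_C, if_neg (by omega), if_neg (by omega)]
      ring
    rw [h6, neg_zero]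
  exact (congrArg _ htr).trans (smul_zero _)

/-- If every prime power in the factorization of `a` has multiplicity divisible by `m`,
then `a` is an `m`-th power. -/
theorem exists_pow_eq_of_dvd_factorization {a m : ℕ} (ha : a ≠ 0)
    (h : ∀ q : ℕ, q.Prime → m ∣ a.factorization q) : ∃ s : ℕ, s ^ m = a := by
  refine ⟨a.factorization.prod fun q e => q ^ (e / m), ?_⟩
  conv_rhs => rw [← Nat.factorization_prod_pow_eq_self ha]
  rw [Finsupp.prod, Finsupp.prod, ← Finset.prod_pow]
  apply Finset.prod_congr rfl
  intro q hq
  rw [← pow_mul, Nat.div_mul_cancel (h q (Nat.prime_of_mem_primeFactors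
    (by rwa [Nat.support_factorization] at hq)))]

/-- Generic grouping of a multivariate integer polynomial evaluation at radical-type
elements, by residues of the exponents. -/
theorem eval₂_eq_sum_residues {k : ℕ} (a d : Fin k → ℕ) (hd : ∀ i, 0 < d i)
    (f : MvPolynomial (Fin k) ℤ) {R : Type} [CommRing R] (φ : ℤ →+* R)
    (β : Fin k → R) (hβ : ∀ i, β i ^ d i = (a i : R)) :
    MvPolynomial.eval₂ φ β f =
      ∑ v : (∀ i, Fin (d i)),
        φ (∑ e ∈ f.support.filter
            (fun e => (fun i => (⟨e i % d i, Nat.mod_lt _ (hd i)⟩ : Fin (d i))) = v),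
          f.coeff e * ((∏ i, a i ^ (e i / d i) : ℕ) : ℤ)) * ∏ i, β i ^ ((v i : ℕ)) := by
  classical
  rw [MvPolynomial.eval₂_eq']
  rw [← Finset.sum_fiberwise_of_maps_to
    (g := fun e => (fun i => (⟨e i % d i, Nat.mod_lt _ (hd i)⟩ : Fin (d i))))
    (fun e _ => Finset.mem_univ _)
    (fun e => φ (f.coeff e) * ∏ i, β i ^ (e i))]
  apply Finset.sum_congr rfl
  intro v _
  rw [map_sum, Finset.sum_mul]
  apply Finset.sum_congr rfl
  intro e he
  have hσ : ∀ i, (e i % d i) = (v i : ℕ) := by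
    intro i
    have := (Finset.mem_filter.mp he).2
    exact congrArg Fin.val (congrFun this i)
  have hterm : ∀ i, β i ^ (e i) = (a i : R) ^ (e i / d i) * β i ^ ((v i : ℕ)) := by
    intro i
    conv_lhs => rw [← Nat.div_add_mod (e i) (d i)]
    rw [pow_add, pow_mul, hβ i, hσ i]
  calc φ (f.coeff e) * ∏ i, β i ^ (e i)
      = φ (f.coeff e) * ((∏ i, (a i : R) ^ (e i / d i)) * ∏ i, β i ^ ((v i : ℕ))) := by
        rw [← Finset.prod_mul_distrib]
        congr 1
        exact Finset.prod_congr rfl fun i _ => hterm i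
    _ = φ (f.coeff e * ((∏ i, a i ^ (e i / d i) : ℕ) : ℤ)) * ∏ i, β i ^ ((v i : ℕ)) := by
        simp only [eq_intCast]
        push_cast
        ring

open IntermediateField in
/-- ℤ-linear independence of the reduced radical monomials. -/
theorem radical_monomials_indep {k : ℕ} (a d : Fin k → ℕ)
    (ha : ∀ i, 0 < a i) (hd : ∀ i, 0 < d i)
    (hcop : ∀ i j, i ≠ j → Nat.Coprime (a i) (a j))
    (hirr : ∀ i, Irreducible (X ^ (d i) - C ((a i : ℚ))))
    (r : Fin k → ℝ) (hr_pos : ∀ i, 0 < r i) (hr_pow : ∀ i, r i ^ d i = (a i : ℝ))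
    (Co : (∀ i, Fin (d i)) → ℤ)
    (hC : (∑ v : (∀ i, Fin (d i)), (Co v : ℝ) * ∏ i, r i ^ ((v i : ℕ))) = 0) :
    ∀ v0, Co v0 = 0 := by
  classical
  intro v0
  set N := ∏ i, d i with hN
  have hN0 : N ≠ 0 := Finset.prod_ne_zero_iff.mpr fun i _ => (hd i).ne'
  have hdvd : ∀ i, d i ∣ N := fun i => Finset.dvd_prod_of_mem d (Finset.mem_univ i)
  set Mr : (∀ i, Fin (d i)) → ℝ := fun v => ∏ i, r i ^ ((v i : ℕ)) with hMr
  have hMr_pos : ∀ v, 0 < Mr v := fun v => Finset.prod_pos fun i _ => pow_pos (hr_pos i) _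
  have hMrN : ∀ v, (Mr v) ^ N = ((∏ i, a i ^ ((v i : ℕ) * (N / d i)) : ℕ) : ℝ) := by
    intro v
    rw [hMr, ← Finset.prod_pow]
    push_cast
    apply Finset.prod_congr rfl
    intro i _
    rw [← pow_mul, show (v i : ℕ) * N = d i * ((v i : ℕ) * (N / d i)) by
      rw [← Nat.mul_left_comm, Nat.mul_div_cancel' (hdvd i)], pow_mul, hr_pow i]
  -- the number field
  have hint : ∀ x ∈ Set.range r, IsIntegral ℚ x := by
    rintro x ⟨i, rfl⟩
    refine ⟨X ^ (d i) - C ((a i : ℚ)), monic_X_pow_sub_C _ (hd i).ne', ?_⟩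
    rw [eval₂_sub, eval₂_pow, eval₂_X, eval₂_C, hr_pow i, eq_ratCast]
    push_cast
    ring
  haveI : Finite ↥(Set.range r) := (Set.finite_range r).to_subtype
  set L := IntermediateField.adjoin ℚ (Set.range r) with hL
  haveI : FiniteDimensional ℚ ↥L := finiteDimensional_adjoin fun x hx => hint x hx
  have hrL : ∀ i, r i ∈ L := fun i => IntermediateField.subset_adjoin _ _ ⟨i, rfl⟩
  have hMrL : ∀ v, Mr v ∈ L := fun v => prod_mem fun i _ => pow_mem (hrL i) _
  -- irrationality of nontrivial monomial ratios
  have hirrat : ∀ v : (∀ i, Fin (d i)), v ≠ v0 → ∀ s : ℚ, Mr v * (Mr v0)⁻¹ ≠ (s : ℝ) := by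
    intro v hvne s hs
    have hs_pos : (0:ℝ) < (s : ℝ) := by
      rw [← hs]
      exact mul_pos (hMr_pos v) (inv_pos.mpr (hMr_pos v0))
    have hs0 : 0 < s := by exact_mod_cast hs_pos
    set A := ∏ i, a i ^ ((v i : ℕ) * (N / d i)) with hA
    set B := ∏ i, a i ^ ((v0 i : ℕ) * (N / d i)) with hB
    have hA0 : A ≠ 0 := Finset.prod_ne_zero_iff.mpr fun i _ => pow_ne_zero _ (ha i).ne'
    have hB0 : B ≠ 0 := Finset.prod_ne_zero_iff.mpr fun i _ => pow_ne_zero _ (ha i).ne'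
    have hABr : (A : ℝ) = (s : ℝ) ^ N * (B : ℝ) := by
      rw [← hMrN v, ← hMrN v0, ← hs, mul_pow, inv_pow,
        inv_mul_cancel_right₀ (pow_ne_zero _ (hMr_pos v0).ne')]
    set P := s.num.toNat with hP
    set Q := s.den with hQ
    have hP0 : P ≠ 0 := by
      rw [hP]
      have : 0 < s.num := Rat.num_pos.mpr hs0
      omega
    have hQ0 : Q ≠ 0 := s.den_pos.ne'
    have hsPQ : (s : ℝ) * (Q : ℝ) = (P : ℝ) := by
      have h1 : ((P : ℕ) : ℝ) = ((s.num : ℤ) : ℝ) := by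
        rw [hP]
        exact_mod_cast congrArg (fun z : ℤ => (z : ℝ))
          (Int.toNat_of_nonneg (Rat.num_pos.mpr hs0).le)
      rw [h1, hQ, Rat.cast_def, div_mul_cancel₀ _ (by exact_mod_cast s.den_pos.ne' : (s.den:ℝ) ≠ 0)]
    have hE : A * Q ^ N = P ^ N * B := by
      have hreal : (A : ℝ) * (Q : ℝ) ^ N = (P : ℝ) ^ N * (B : ℝ) := by
        rw [hABr, ← hsPQ, mul_pow]
        ring
      exact_mod_cast hreal
    obtain ⟨i₀, hi₀⟩ := Function.ne_iff.mp hvne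
    have hval_ne : (v i₀ : ℕ) ≠ (v0 i₀ : ℕ) := fun h => hi₀ (Fin.ext h)
    have hd2 : 2 ≤ d i₀ := by
      have h1 := (v i₀).isLt
      have h2 := (v0 i₀).isLt
      omega
    have ha1 : a i₀ ≠ 1 := by
      intro h1
      apply pow_ne_of_irreducible_X_pow_sub_C (hirr i₀) dvd_rfl (by omega) (1 : ℚ)
      rw [one_pow, h1]
      norm_num
    -- factorization of products
    have hprodfac : ∀ (E : Fin k → ℕ) (q : ℕ),
        (∏ i, a i ^ E i).factorization q = ∑ i, E i * (a i).factorization q := by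
      intro E q
      rw [Nat.factorization_prod fun i _ => pow_ne_zero _ (ha i).ne']
      rw [Finset.sum_apply']
      apply Finset.sum_congr rfl
      intro i _
      rw [Nat.factorization_pow, Finsupp.smul_apply, smul_eq_mul]
    have hother : ∀ q : ℕ, q.Prime → q ∣ a i₀ → ∀ i, i ≠ i₀ → (a i).factorization q = 0 := by
      intro q hq hqa i hne'
      apply Nat.factorization_eq_zero_of_not_dvd
      intro habs
      have h1 : q ∣ Nat.gcd (a i) (a i₀) := Nat.dvd_gcd habs hqa
      rw [hcop i i₀ hne'] at h1
      exact hq.one_lt.ne' (Nat.dvd_one.mp h1)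
    set uZ : ℤ := ((v i₀ : ℕ) : ℤ) - ((v0 i₀ : ℕ) : ℤ) with huZ
    set u := uZ.natAbs with hu
    have hu0 : u ≠ 0 := by
      rw [hu, huZ]
      omega
    have hu_lt : u < d i₀ := by
      have h1 := (v i₀).isLt
      have h2 := (v0 i₀).isLt
      rw [hu, huZ]
      omega
    have hduw : ∀ q : ℕ, q.Prime → q ∣ a i₀ → d i₀ ∣ u * (a i₀).factorization q := by
      intro q hq hqa
      have hEq := congrArg (fun t : ℕ => t.factorization q) hE
      simp only [Nat.factorization_mul hA0 (pow_ne_zero _ hQ0),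
        Nat.factorization_mul (pow_ne_zero _ hP0) hB0,
        Nat.factorization_pow, Finsupp.coe_add, Finsupp.coe_smul, Pi.add_apply,
        Pi.smul_apply, smul_eq_mul] at hEq
      rw [hA, hB, hprodfac, hprodfac] at hEq
      rw [Finset.sum_eq_single i₀ (fun i _ hne' => by rw [hother q hq hqa i hne', mul_zero])
          (fun h => absurd (Finset.mem_univ i₀) h),
        Finset.sum_eq_single i₀ (fun i _ hne' => by rw [hother q hq hqa i hne', mul_zero])
          (fun h => absurd (Finset.mem_univ i₀) h)] at hEq
      set w := (a i₀).factorization q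
      set n' := N / d i₀ with hn'
      have hNd : N = d i₀ * n' := (Nat.mul_div_cancel' (hdvd i₀)).symm
      have hn'0 : n' ≠ 0 := by
        intro h
        rw [h, mul_zero] at hNd
        exact hN0 hNd
      rw [hNd] at hEq
      have hZ : (d i₀ : ℤ) ∣ uZ * ((a i₀).factorization q : ℤ) := by
        refine ⟨(P.factorization q : ℤ) - (Q.factorization q : ℤ), ?_⟩
        have hEqZ := congrArg (fun t : ℕ => (t : ℤ)) hEq
        push_cast at hEqZ
        have hn'Z : (n' : ℤ) ≠ 0 := by exact_mod_cast hn'0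
        apply mul_left_cancel₀ hn'Z
        rw [huZ]
        ring_nf
        ring_nf at hEqZ
        linarith
      have := Int.natAbs_dvd_natAbs.mpr hZ
      rwa [Int.natAbs_mul, Int.natAbs_natCast, Int.natAbs_natCast] at this
    set g := Nat.gcd u (d i₀) with hg
    have hg0 : 0 < g := Nat.gcd_pos_of_pos_right _ (hd i₀)
    set m := d i₀ / g with hm
    have hgd : g ∣ d i₀ := Nat.gcd_dvd_right _ _
    have hgu : g ∣ u := Nat.gcd_dvd_left _ _
    have hm_dvd : m ∣ d i₀ := Nat.div_dvd_of_dvd hgd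
    have hdgm : d i₀ = g * m := (Nat.mul_div_cancel' hgd).symm
    have hugu : u = g * (u / g) := (Nat.mul_div_cancel' hgu).symm
    have hm1 : m ≠ 1 := by
      intro h1
      rw [h1, mul_one] at hdgm
      have : g ≤ u := Nat.le_of_dvd (Nat.pos_of_ne_zero hu0) hgu
      omega
    have hmw : ∀ q : ℕ, q.Prime → m ∣ (a i₀).factorization q := by
      intro q hq
      by_cases hqa : q ∣ a i₀
      · obtain ⟨t, ht⟩ := hduw q hq hqa
        have h2 : m ∣ (u / g) * (a i₀).factorization q := by
          refine ⟨t, Nat.eq_of_mul_eq_mul_left hg0 ?_⟩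
          calc g * (u / g * (a i₀).factorization q)
              = g * (u / g) * (a i₀).factorization q := by ring
            _ = u * (a i₀).factorization q := by rw [← hugu]
            _ = d i₀ * t := ht
            _ = g * (m * t) := by rw [hdgm]; ring
        have hco : Nat.Coprime m (u / g) :=
          (Nat.coprime_div_gcd_div_gcd hg0).symm
        exact hco.dvd_of_dvd_mul_left h2
      · rw [Nat.factorization_eq_zero_of_not_dvd hqa]
        exact dvd_zero m
    obtain ⟨s', hs'⟩ := exists_pow_eq_of_dvd_factorization (ha i₀).ne' hmw
    apply pow_ne_of_irreducible_X_pow_sub_C (hirr i₀) hm_dvd hm1 ((s' : ℕ) : ℚ)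
    exact_mod_cast congrArg (fun t : ℕ => (t : ℚ)) hs'
  -- elements of L and the trace argument
  set xL : (∀ i, Fin (d i)) → ↥L := fun v =>
    (⟨Mr v, hMrL v⟩ : ↥L) * (⟨Mr v0, hMrL v0⟩ : ↥L)⁻¹ with hxL
  have hMv0_ne : (⟨Mr v0, hMrL v0⟩ : ↥L) ≠ 0 := by
    intro h
    have := congrArg (fun t : ↥L => (t : ℝ)) h
    simp only [ZeroMemClass.coe_zero] at this
    exact (hMr_pos v0).ne' this
  have hxL_coe : ∀ v, ((xL v : ↥L) : ℝ) = Mr v * (Mr v0)⁻¹ := by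
    intro v
    rw [hxL]
    push_cast
    rfl
  have hsum0 : (∑ v, (Co v : ℚ) • xL v) = 0 := by
    apply (algebraMap (↥L) ℝ).injective
    rw [map_zero, map_sum]
    have hxLalg : ∀ v, (algebraMap (↥L) ℝ) (xL v) = Mr v * (Mr v0)⁻¹ := fun v => hxL_coe v
    have hterm : ∀ v, (algebraMap (↥L) ℝ) ((Co v : ℚ) • xL v)
        = (Co v : ℝ) * Mr v * (Mr v0)⁻¹ := by
      intro v
      rw [Algebra.smul_def, map_mul, hxLalg v, ← IsScalarTower.algebraMap_apply, eq_ratCast]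
      push_cast
      ring
    rw [Finset.sum_congr rfl fun v _ => hterm v, ← Finset.sum_mul,
      show (∑ v, (Co v : ℝ) * Mr v) = ∑ v : (∀ i, Fin (d i)), (Co v : ℝ) * ∏ i, r i ^ ((v i : ℕ)) from rfl,
      hC, zero_mul]
  have htr := congrArg (Algebra.trace ℚ ↥L) hsum0
  rw [map_sum, map_zero] at htr
  have htr_v0 : Algebra.trace ℚ (↥L) (xL v0) = (Module.finrank ℚ ↥L : ℚ) := by
    have h1 : xL v0 = 1 := mul_inv_cancel₀ hMv0_ne
    rw [h1, show (1 : ↥L) = algebraMap ℚ (↥L) 1 from (map_one _).symm,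
      Algebra.trace_algebraMap]
    simp
  have htr_other : ∀ v, v ≠ v0 → Algebra.trace ℚ (↥L) (xL v) = 0 := by
    intro v hvne
    apply trace_eq_zero_of_radical L (xL v)
      (by rw [hxL_coe v]; exact mul_pos (hMr_pos v) (inv_pos.mpr (hMr_pos v0))) N hN0
      (((∏ i, a i ^ ((v i : ℕ) * (N / d i)) : ℕ) : ℚ) / ((∏ i, a i ^ ((v0 i : ℕ) * (N / d i)) : ℕ) : ℚ))
    · rw [hxL_coe v, mul_pow, inv_pow, hMrN v, hMrN v0]
      push_cast
      rw [div_eq_mul_inv]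
    · intro s
      rw [hxL_coe v]
      exact hirrat v hvne s
  rw [Finset.sum_eq_single v0 (fun v _ hvne => by
      rw [LinearMap.map_smul, htr_other v hvne, smul_zero])
    (fun h => absurd (Finset.mem_univ v0) h)] at htr
  rw [LinearMap.map_smul, htr_v0, smul_eq_mul] at htr
  have hfr : (Module.finrank ℚ ↥L : ℚ) ≠ 0 := by
    exact_mod_cast Module.finrank_pos.ne'
  have : (Co v0 : ℚ) = 0 := by
    rcases mul_eq_zero.mp htr with h | h
    · exact h
    · exact absurd h hfr
  exact_mod_cast this

/-- If there is a prime `p ≡ 1 (mod lcm(d₁,…,d_k))` dividing no `aᵢ`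
and elements `ᾱᵢ ∈ 𝔽_p` with `ᾱᵢ ^ dᵢ = aᵢ` such that the reduction
`f̄(ᾱ₁,…,ᾱ_k) ≠ 0` in `𝔽_p`, then `f(ᵈ¹√a₁, …, ᵈᵏ√a_k) ≠ 0`. -/
theorem nonzero_of_nonzero_mod_p
    (k : ℕ) (a d : Fin k → ℕ)
    (ha : ∀ i, 0 < a i) (hd : ∀ i, 0 < d i)
    (hcop : ∀ i j, i ≠ j → Nat.Coprime (a i) (a j))
    (hirr : ∀ i, Irreducible (X ^ (d i) - C ((a i : ℚ))))
    (D : ℕ) (hD : D = Finset.univ.lcm d)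
    (f : MvPolynomial (Fin k) ℤ)
    (p : ℕ) [Fact p.Prime]
    (hpd : p % D = 1)
    (hpa : ∀ i, ¬ (p ∣ a i))
    (α : Fin k → ZMod p) (hα : ∀ i, α i ^ (d i) = ((a i : ℕ) : ZMod p))
    (hne : MvPolynomial.eval α (MvPolynomial.map (Int.castRingHom (ZMod p)) f) ≠ 0) :
    MvPolynomial.aeval (fun i : Fin k => (a i : ℝ) ^ ((d i : ℝ)⁻¹)) f ≠ 0 := by
  classical
  intro hf0
  apply hne
  set r : Fin k → ℝ := fun i : Fin k => (a i : ℝ) ^ ((d i : ℝ)⁻¹) with hr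
  have hr_pos : ∀ i, 0 < r i := fun i =>
    Real.rpow_pos_of_pos (by exact_mod_cast ha i) _
  have hr_pow : ∀ i, r i ^ d i = (a i : ℝ) := fun i =>
    Real.rpow_inv_natCast_pow (by positivity) (hd i).ne'
  have h1 := eval₂_eq_sum_residues a d hd f (algebraMap ℤ ℝ) r (fun i => by rw [hr_pow i])
  rw [← MvPolynomial.aeval_def, hf0] at h1
  simp only [eq_intCast] at h1
  have hCzero := radical_monomials_indep a d ha hd hcop hirr r hr_pos hr_pow
    (fun v => ∑ e ∈ f.support.filter
        (fun e => (fun i => (⟨e i % d i, Nat.mod_lt _ (hd i)⟩ : Fin (d i))) = v),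
      f.coeff e * ((∏ i, a i ^ (e i / d i) : ℕ) : ℤ))
    h1.symm
  have h2 := eval₂_eq_sum_residues a d hd f (Int.castRingHom (ZMod p)) α (fun i => hα i)
  rw [MvPolynomial.eval_map, h2]
  apply Finset.sum_eq_zero
  intro v _
  have h3 : (∑ e ∈ f.support.filter
      (fun e => (fun i => (⟨e i % d i, Nat.mod_lt _ (hd i)⟩ : Fin (d i))) = v),
    f.coeff e * ((∏ i, a i ^ (e i / d i) : ℕ) : ℤ)) = 0 := hCzero v
  rw [h3, map_zero, zero_mul]
end

section
/- Let s ≥ 4 be an integer, let k ≤ s, let a_1,…,a_k be pairwise coprime positive integers and d_1,…,d_k positive integers, all of magnitude at most 2^s, such that for each i the polynomial X^{d_i} − a_i is irreducible over ℚ; let K ⊆ ℂ be the splitting field of ∏_{i=1}^k (X^{d_i} − a_i) over ℚ. Let f ∈ ℤ[x_1,…,x_k] have total degree at most 2^s and all coefficients of absolute value at most 2^{2^s}, and set α = f(d_1√a_1, …, d_k√a_k) ∈ K. Then the field norm satisfies |N_{K/ℚ}(α)| ≤ 2^{2^{s^3}}. -/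
set_option maxHeartbeats 2000000

open Polynomial IntermediateField Module

private lemma finrank_biSup_le_prod' {ι : Type*} [DecidableEq ι] (t : ι → IntermediateField ℚ ℂ)
    (s : Finset ι) :
    finrank ℚ (⨆ i ∈ s, t i : IntermediateField ℚ ℂ) ≤ ∏ i ∈ s, finrank ℚ (t i) := by
  induction s using Finset.induction with
  | empty =>
    rw [show (⨆ i ∈ (∅ : Finset ι), t i) = ⊥ by simp, Finset.prod_empty]
    exact le_of_eq IntermediateField.finrank_bot
  | insert a s hnot ih =>
    rw [Finset.iSup_insert, Finset.prod_insert hnot]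
    exact le_trans (IntermediateField.finrank_sup_le _ _) (Nat.mul_le_mul_left _ ih)

private lemma aux_sq' (s : ℕ) (hs : 4 ≤ s) : s ^ 2 + s ≤ 2 * 2 ^ s := by
  induction s, hs using Nat.le_induction with
  | base => norm_num
  | succ n hn ih =>
    calc (n+1) ^ 2 + (n+1) ≤ 2 * (n ^ 2 + n) := by nlinarith
    _ ≤ 2 * (2 * 2 ^ n) := by omega
    _ = 2 * 2 ^ (n+1) := by ring

private lemma aux_lin' (s : ℕ) (hs : 4 ≤ s) : s + 3 ≤ 2 ^ s := by
  induction s, hs using Nat.le_induction with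
  | base => norm_num
  | succ n hn ih =>
    have h := Nat.one_le_two_pow (n := n)
    have h2 : 2 ^ (n+1) = 2 * 2 ^ n := by ring
    omega

theorem norm_bound_of_circuit_value
    (s : ℕ) (hs : 4 ≤ s) (k : ℕ) (hk : k ≤ s)
    (a d : Fin k → ℕ)
    (ha : ∀ i, 0 < a i) (hd : ∀ i, 0 < d i)
    (hab : ∀ i, a i ≤ 2 ^ s) (hdb : ∀ i, d i ≤ 2 ^ s)
    (hcop : ∀ i j, i ≠ j → Nat.Coprime (a i) (a j))
    (hirr : ∀ i, Irreducible (X ^ (d i) - C ((a i : ℚ))))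
    (K : IntermediateField ℚ ℂ)
    (hK : K = IntermediateField.adjoin ℚ
      ((∏ i : Fin k, (X ^ (d i) - C ((a i : ℚ)))).rootSet ℂ))
    (f : MvPolynomial (Fin k) ℤ)
    (hdeg : f.totalDegree ≤ 2 ^ s)
    (hcoeff : ∀ m : Fin k →₀ ℕ, |f.coeff m| ≤ 2 ^ (2 ^ s))
    (x : K)
    (hx : (x : ℂ) =
      MvPolynomial.aeval (fun i : Fin k => (((a i : ℝ) ^ ((d i : ℝ)⁻¹) : ℝ) : ℂ)) f) :
    |Algebra.norm ℚ x| ≤ (2 : ℚ) ^ (2 ^ (s ^ 3)) := by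
  classical
  set r : Fin k → ℂ := fun i => (((a i : ℝ) ^ ((d i : ℝ)⁻¹) : ℝ) : ℂ) with hrdef
  set P : ℚ[X] := ∏ i : Fin k, (X ^ (d i) - C ((a i : ℚ))) with hPdef
  -- basic facts about the radicals
  have hrpow : ∀ i, r i ^ (d i) = ((a i : ℚ) : ℂ) := by
    intro i
    have h1 : ((a i : ℝ) ^ ((d i : ℝ)⁻¹)) ^ (d i) = (a i : ℝ) :=
      Real.rpow_inv_natCast_pow (by positivity) (hd i).ne'
    rw [hrdef]
    push_cast [← Complex.ofReal_pow, h1]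
    norm_num
  have hane : ∀ i, ((a i : ℚ) : ℂ) ≠ 0 := by
    intro i
    have := ha i
    simp only [ne_eq, Rat.cast_eq_zero, Nat.cast_eq_zero]
    omega
  have hrne : ∀ i, r i ≠ 0 := by
    intro i
    simp only [hrdef, ne_eq, Complex.ofReal_eq_zero]
    exact (Real.rpow_pos_of_pos (by exact_mod_cast ha i) _).ne'
  have hPmonic : P.Monic :=
    monic_prod_of_monic _ _ fun i _ => monic_X_pow_sub_C _ (hd i).ne'
  have hPne : P ≠ 0 := hPmonic.ne_zero
  have haeval : ∀ z : ℂ, aeval z P = ∏ i : Fin k, (z ^ (d i) - ((a i : ℚ) : ℂ)) := by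
    intro z
    rw [hPdef, map_prod]
    refine Finset.prod_congr rfl fun i _ => ?_
    simp
  have hmem : ∀ i, r i ∈ P.rootSet ℂ := by
    intro i
    rw [mem_rootSet]
    refine ⟨hPne, ?_⟩
    rw [haeval]
    exact Finset.prod_eq_zero (Finset.mem_univ i) (by rw [hrpow]; ring)
  have hKr : ∀ i, r i ∈ K := by
    intro i; rw [hK]; exact subset_adjoin ℚ _ (hmem i)
  set ρ : Fin k → K := fun i => ⟨r i, hKr i⟩ with hρdef
  haveI : FiniteDimensional ℚ K := by
    rw [hK]
    exact IntermediateField.finiteDimensional_adjoin fun z hz =>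
      IsAlgebraic.isIntegral ⟨P, hPne, (mem_rootSet.mp hz).2⟩
  -- x is the evaluation at the ρ's
  have hxρ : x = MvPolynomial.aeval ρ f := by
    apply Subtype.coe_injective
    show (x : ℂ) = ((MvPolynomial.aeval ρ f : K) : ℂ)
    rw [hx]
    exact (MvPolynomial.comp_aeval_apply ρ ((K.val).restrictScalars ℤ) f).symm
  have hρpow : ∀ i, ρ i ^ (d i) = algebraMap ℚ K ((a i : ℚ)) := by
    intro i
    apply Subtype.coe_injective
    push_cast
    rw [hrpow i]
    rfl
  -- bound on each embedding value
  set Cn : ℕ := (2 ^ s + 1) ^ k * (2 ^ (2 ^ s) * (2 ^ s) ^ (2 ^ s)) with hCdef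
  have hms : ∀ m ∈ f.support, ∀ i, m i ≤ 2 ^ s := by
    intro m hm i
    have h1 : m i ≤ ∑ j ∈ m.support, m j := by
      by_cases hi : i ∈ m.support
      · exact Finset.single_le_sum (fun _ _ => Nat.zero_le _) hi
      · simp [Finsupp.notMem_support_iff.mp hi]
    exact h1.trans ((MvPolynomial.le_totalDegree hm).trans hdeg)
  have hcard : f.support.card ≤ (2 ^ s + 1) ^ k := by
    have hinj : Set.InjOn
        (fun (m : Fin k →₀ ℕ) (i : Fin k) => (⟨min (m i) (2 ^ s), by omega⟩ : Fin (2 ^ s + 1)))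
        f.support := by
      intro m hm m' hm' h
      ext i
      have h1 := congrFun h i
      simp only [Fin.mk.injEq] at h1
      rwa [min_eq_left (hms m (Finset.mem_coe.mp hm) i),
        min_eq_left (hms m' (Finset.mem_coe.mp hm') i)] at h1
    calc f.support.card ≤ (Finset.univ : Finset (Fin k → Fin (2 ^ s + 1))).card :=
        Finset.card_le_card_of_injOn _ (fun m _ => Finset.mem_univ _) hinj
    _ = (2 ^ s + 1) ^ k := by
        rw [Finset.card_univ]
        simp [Fintype.card_fun]
  have hbound : ∀ g : Fin k → ℂ, (∀ i, ‖g i‖ ≤ (2 : ℝ) ^ s) →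
      ‖MvPolynomial.aeval g f‖ ≤ (Cn : ℝ) := by
    intro g hg
    rw [MvPolynomial.aeval_def, MvPolynomial.eval₂_eq]
    refine le_trans (norm_sum_le _ _) ?_
    have hterm : ∀ m ∈ f.support,
        ‖algebraMap ℤ ℂ (f.coeff m) * ∏ i ∈ m.support, g i ^ m i‖
          ≤ (2 : ℝ) ^ (2 ^ s) * ((2 : ℝ) ^ s) ^ (2 ^ s) := by
      intro m hm
      rw [norm_mul, norm_prod]
      have h1 : ‖algebraMap ℤ ℂ (f.coeff m)‖ ≤ (2 : ℝ) ^ (2 ^ s) := by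
        rw [show (algebraMap ℤ ℂ) (f.coeff m) = ((f.coeff m : ℤ) : ℂ) from rfl,
          Complex.norm_intCast]
        have := hcoeff m
        calc |((f.coeff m : ℤ) : ℝ)| = ((|f.coeff m| : ℤ) : ℝ) := by
              rw [Int.cast_abs]
        _ ≤ (((2 : ℤ) ^ (2 ^ s) : ℤ) : ℝ) := by exact_mod_cast this
        _ = (2 : ℝ) ^ (2 ^ s) := by push_cast; ring
      have h2 : ∏ i ∈ m.support, ‖g i ^ m i‖ ≤ ((2 : ℝ) ^ s) ^ (2 ^ s) := by
        calc ∏ i ∈ m.support, ‖g i ^ m i‖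
            ≤ ∏ i ∈ m.support, ((2 : ℝ) ^ s) ^ (m i) := by
              refine Finset.prod_le_prod (fun i _ => by positivity) fun i _ => ?_
              rw [norm_pow]
              exact pow_le_pow_left₀ (norm_nonneg _) (hg i) _
        _ = ((2 : ℝ) ^ s) ^ (∑ i ∈ m.support, m i) := by
              rw [Finset.prod_pow_eq_pow_sum]
        _ ≤ ((2 : ℝ) ^ s) ^ (2 ^ s) := by
              apply pow_le_pow_right₀ (one_le_pow₀ one_le_two)
              exact le_trans (MvPolynomial.le_totalDegree hm) hdeg
      exact mul_le_mul h1 h2 (Finset.prod_nonneg fun i _ => norm_nonneg _)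
        (by positivity)
    refine le_trans (Finset.sum_le_card_nsmul _ _ _ hterm) ?_
    rw [nsmul_eq_mul, hCdef]
    push_cast
    have hc' : (f.support.card : ℝ) ≤ ((2 : ℝ) ^ s + 1) ^ k := by exact_mod_cast hcard
    exact mul_le_mul_of_nonneg_right hc' (by positivity) |>.trans (le_of_eq (by ring))
  -- bound on each embedding value
  have hemb : ∀ σ : K →ₐ[ℚ] ℂ, ‖σ x‖ ≤ (Cn : ℝ) := by
    intro σ
    have hσx : σ x = MvPolynomial.aeval (fun i => σ (ρ i)) f := by
      rw [hxρ]
      exact MvPolynomial.comp_aeval_apply ρ (σ.restrictScalars ℤ) f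
    rw [hσx]
    apply hbound
    intro i
    have hp : (σ (ρ i)) ^ (d i) = ((a i : ℚ) : ℂ) := by
      rw [← map_pow, hρpow i, AlgHom.commutes]
      norm_cast
    have habs : (‖σ (ρ i)‖) ^ (d i) = (a i : ℝ) := by
      rw [← norm_pow, hp, show ((a i : ℚ) : ℂ) = ((a i : ℕ) : ℂ) by push_cast; ring,
        Complex.norm_natCast]
    rcases le_or_gt (‖σ (ρ i)‖) 1 with h | h
    · exact h.trans (one_le_pow₀ one_le_two)
    · calc ‖σ (ρ i)‖ ≤ (‖σ (ρ i)‖) ^ (d i) :=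
          le_self_pow₀ h.le (hd i).ne'
      _ = (a i : ℝ) := habs
      _ ≤ (2 : ℝ) ^ s := by exact_mod_cast hab i
  -- the norm as a product over embeddings
  have habsN : ‖algebraMap ℚ ℂ (Algebra.norm ℚ x)‖ ≤ (Cn : ℝ) ^ (finrank ℚ K) := by
    rw [Algebra.norm_eq_prod_embeddings ℚ ℂ x, norm_prod]
    calc ∏ σ : K →ₐ[ℚ] ℂ, ‖σ x‖ ≤ ∏ _σ : K →ₐ[ℚ] ℂ, (Cn : ℝ) :=
        Finset.prod_le_prod (fun _ _ => norm_nonneg _) (fun σ _ => hemb σ)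
    _ = (Cn : ℝ) ^ (Fintype.card (K →ₐ[ℚ] ℂ)) := by rw [Finset.prod_const, Finset.card_univ]
    _ = (Cn : ℝ) ^ (finrank ℚ K) := by rw [AlgHom.card]
  -- bound on the degree of K
  set L : ℕ := ∏ i : Fin k, d i with hLdef
  have hL0 : L ≠ 0 := by
    rw [hLdef]
    exact Finset.prod_ne_zero_iff.mpr fun i _ => (hd i).ne'
  haveI : NeZero L := ⟨hL0⟩
  set ζ : ℂ := Complex.exp (2 * Real.pi * Complex.I / L) with hζdef
  have hζ : IsPrimitiveRoot ζ L := Complex.isPrimitiveRoot_exp L hL0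
  have hζaeval : aeval ζ ((X : ℚ[X]) ^ L - C 1) = 0 := by
    rw [map_sub, map_pow, aeval_X, aeval_C, hζ.pow_eq_one]
    simp
  have hζint : IsIntegral ℚ ζ :=
    IsAlgebraic.isIntegral ⟨_, (monic_X_pow_sub_C (1 : ℚ) hL0).ne_zero, hζaeval⟩
  have hζdeg : (minpoly ℚ ζ).natDegree ≤ L := by
    have h1 := natDegree_le_natDegree
      (minpoly.min ℚ ζ (monic_X_pow_sub_C (1 : ℚ) hL0) hζaeval)
    rwa [natDegree_X_pow_sub_C] at h1
  have hraeval : ∀ i, aeval (r i) ((X : ℚ[X]) ^ (d i) - C ((a i : ℚ))) = 0 := by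
    intro i
    rw [map_sub, map_pow, aeval_X, aeval_C, hrpow i]
    simp
  have hrint : ∀ i, IsIntegral ℚ (r i) := fun i =>
    IsAlgebraic.isIntegral ⟨_, (monic_X_pow_sub_C ((a i : ℚ)) (hd i).ne').ne_zero, hraeval i⟩
  have hrdeg : ∀ i, (minpoly ℚ (r i)).natDegree ≤ d i := by
    intro i
    have h1 := natDegree_le_natDegree
      (minpoly.min ℚ (r i) (monic_X_pow_sub_C ((a i : ℚ)) (hd i).ne') (hraeval i))
    rwa [natDegree_X_pow_sub_C] at h1
  set T : IntermediateField ℚ ℂ :=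
    ℚ⟮ζ⟯ ⊔ (⨆ i ∈ (Finset.univ : Finset (Fin k)), ℚ⟮r i⟯) with hTdef
  have hζT : ζ ∈ T := SetLike.le_def.mp le_sup_left (mem_adjoin_simple_self ℚ ζ)
  have hrT : ∀ i, r i ∈ T := fun i =>
    SetLike.le_def.mp
      (le_trans (le_iSup₂ (f := fun (i : Fin k) (_ : i ∈ (Finset.univ : Finset (Fin k))) =>
        ℚ⟮r i⟯) i (Finset.mem_univ i)) le_sup_right)
      (mem_adjoin_simple_self ℚ (r i))
  have hKT : K ≤ T := by
    rw [hK, adjoin_le_iff]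
    intro z hz
    obtain ⟨-, hz2⟩ := mem_rootSet.mp hz
    rw [haeval] at hz2
    obtain ⟨i, -, hi⟩ := Finset.prod_eq_zero_iff.mp hz2
    have hzd : z ^ (d i) = ((a i : ℚ) : ℂ) := sub_eq_zero.mp hi
    have hwd : (z / r i) ^ (d i) = 1 := by
      rw [div_pow, hzd, hrpow i, div_self (hane i)]
    obtain ⟨c, hc⟩ := Finset.dvd_prod_of_mem d (Finset.mem_univ i)
    have hwL : (z / r i) ^ L = 1 := by
      rw [hLdef, hc, pow_mul, hwd, one_pow]
    obtain ⟨j, -, hj⟩ := hζ.eq_pow_of_pow_eq_one hwL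
    have hzeq : z = ζ ^ j * r i := by
      rw [hj, div_mul_cancel₀ _ (hrne i)]
    rw [hzeq]
    exact mul_mem (pow_mem hζT j) (hrT i)
  haveI hfdζ : FiniteDimensional ℚ ℚ⟮ζ⟯ := adjoin.finiteDimensional hζint
  haveI hfdr : ∀ i : Fin k, FiniteDimensional ℚ ℚ⟮r i⟯ := fun i =>
    adjoin.finiteDimensional (hrint i)
  haveI : FiniteDimensional ℚ
      (⨆ i ∈ (Finset.univ : Finset (Fin k)), ℚ⟮r i⟯ : IntermediateField ℚ ℂ) :=
    IntermediateField.finiteDimensional_iSup_of_finset' fun i _ => hfdr i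
  haveI : FiniteDimensional ℚ T := IntermediateField.finiteDimensional_sup _ _
  have hfrK : finrank ℚ K ≤ finrank ℚ T :=
    LinearMap.finrank_le_finrank_of_injective
      (f := (IntermediateField.inclusion hKT).toLinearMap)
      (IntermediateField.inclusion_injective hKT)
  have hfrT : finrank ℚ T ≤ L * L := by
    calc finrank ℚ T ≤ finrank ℚ ℚ⟮ζ⟯ *
        finrank ℚ (⨆ i ∈ (Finset.univ : Finset (Fin k)), ℚ⟮r i⟯ : IntermediateField ℚ ℂ) :=
      IntermediateField.finrank_sup_le _ _
    _ ≤ L * L := by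
      apply Nat.mul_le_mul
      · rw [adjoin.finrank hζint]; exact hζdeg
      · refine le_trans (finrank_biSup_le_prod' _ _) ?_
        rw [hLdef]
        exact Finset.prod_le_prod' fun i _ => by
          rw [adjoin.finrank (hrint i)]; exact hrdeg i
  have hLle : L ≤ 2 ^ (s * s) := by
    calc L ≤ ∏ _i : Fin k, 2 ^ s := Finset.prod_le_prod' fun i _ => hdb i
    _ = 2 ^ (s * k) := by rw [Finset.prod_const, Finset.card_univ, Fintype.card_fin, ← pow_mul]
    _ ≤ 2 ^ (s * s) := Nat.pow_le_pow_right (by norm_num) (Nat.mul_le_mul_left s hk)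
  have hF : finrank ℚ K ≤ 2 ^ (s * s) * 2 ^ (s * s) :=
    le_trans (hfrK.trans hfrT) (Nat.mul_le_mul hLle hLle)
  -- the purely numerical estimate
  have hone : (1 : ℕ) ≤ 2 ^ s := Nat.one_le_two_pow
  have hC2 : Cn ≤ 2 ^ ((s + 3) * 2 ^ s) := by
    have h1 : (2 ^ s + 1) ^ k ≤ (2 ^ (s + 1)) ^ k :=
      Nat.pow_le_pow_left (by rw [pow_succ]; omega) k
    calc Cn ≤ (2 ^ (s + 1)) ^ k * (2 ^ (2 ^ s) * (2 ^ s) ^ (2 ^ s)) :=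
        Nat.mul_le_mul_right _ h1
    _ = 2 ^ ((s + 1) * k + (2 ^ s + s * 2 ^ s)) := by
        rw [← pow_mul, ← pow_mul, ← pow_add, ← pow_add]
    _ ≤ 2 ^ ((s + 3) * 2 ^ s) := by
        apply Nat.pow_le_pow_right (by norm_num)
        have h2 := aux_sq' s hs
        have h3 : (s + 1) * k ≤ (s + 1) * s := Nat.mul_le_mul_left _ hk
        nlinarith
  have hNat : Cn ^ (finrank ℚ K) ≤ 2 ^ (2 ^ (s ^ 3)) := by
    calc Cn ^ (finrank ℚ K) ≤ (2 ^ ((s + 3) * 2 ^ s)) ^ (finrank ℚ K) :=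
        Nat.pow_le_pow_left hC2 _
    _ ≤ (2 ^ ((s + 3) * 2 ^ s)) ^ (2 ^ (s * s) * 2 ^ (s * s)) :=
        Nat.pow_le_pow_right (Nat.one_le_two_pow) hF
    _ = 2 ^ ((s + 3) * (2 ^ s * (2 ^ (s * s) * 2 ^ (s * s)))) := by
        rw [← pow_mul, mul_assoc]
    _ = 2 ^ ((s + 3) * 2 ^ (s + (s * s + s * s))) := by
        rw [← pow_add, ← pow_add]
    _ ≤ 2 ^ (2 ^ s * 2 ^ (s + (s * s + s * s))) := by
        apply Nat.pow_le_pow_right (by norm_num)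
        exact Nat.mul_le_mul_right _ (aux_lin' s hs)
    _ = 2 ^ (2 ^ (s + (s + (s * s + s * s)))) := by rw [← pow_add]
    _ ≤ 2 ^ (2 ^ (s ^ 3)) := by
        apply Nat.pow_le_pow_right (by norm_num)
        apply Nat.pow_le_pow_right (by norm_num)
        nlinarith
  -- conclude
  have habsQ : |Algebra.norm ℚ x| ≤ ((Cn ^ (finrank ℚ K) : ℕ) : ℚ) := by
    have h := habsN
    rw [eq_ratCast (algebraMap ℚ ℂ), ← Complex.ofReal_ratCast, Complex.norm_real, Real.norm_eq_abs] at h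
    rw [show ((Cn : ℝ)) ^ (finrank ℚ K) = ((Cn ^ (finrank ℚ K) : ℕ) : ℝ) by push_cast; ring] at h
    exact_mod_cast h
  calc |Algebra.norm ℚ x| ≤ ((Cn ^ (finrank ℚ K) : ℕ) : ℚ) := habsQ
  _ ≤ ((2 ^ (2 ^ (s ^ 3)) : ℕ) : ℚ) := by exact_mod_cast hNat
  _ = (2 : ℚ) ^ (2 ^ (s ^ 3)) := by push_cast; ring
end

section
/- Let α and β be algebraic numbers over ℚ of degrees m and n respectively. Then there exists an integer c with 1 ≤ c ≤ m²n² + 1 such that α + cβ is a primitive element of ℚ(α, β); that is, ℚ(α, β) = ℚ(α + cβ). -/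
open IntermediateField Polynomial

/-- (Effective primitive element theorem.) If `α` and `β` are
algebraic numbers of degrees `m` and `n` over `ℚ`, then there is an integer `c`
with `1 ≤ c ≤ m²n² + 1` such that `ℚ(α, β) = ℚ(α + cβ)`. -/
theorem effective_primitive_element
    (α β : ℂ) (hα : IsAlgebraic ℚ α) (hβ : IsAlgebraic ℚ β)
    (m n : ℕ) (hm : (minpoly ℚ α).natDegree = m) (hn : (minpoly ℚ β).natDegree = n) :
    ∃ c : ℤ, 1 ≤ c ∧ c ≤ (m : ℤ) ^ 2 * (n : ℤ) ^ 2 + 1 ∧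
      IntermediateField.adjoin ℚ {α, β} =
        IntermediateField.adjoin ℚ {α + (c : ℂ) * β} := by
  classical
  have hαi : IsIntegral ℚ α := hα.isIntegral
  have hβi : IsIntegral ℚ β := hβ.isIntegral
  set K : IntermediateField ℚ ℂ := IntermediateField.adjoin ℚ {α, β} with hK
  have hαK : α ∈ K := subset_adjoin ℚ _ (by simp)
  have hβK : β ∈ K := subset_adjoin ℚ _ (by simp)
  haveI : Finite ({α, β} : Set ℂ) :=
    ((Set.finite_singleton β).insert α).to_subtype
  haveI : FiniteDimensional ℚ K :=
    IntermediateField.finiteDimensional_adjoin (by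
      rintro x hx
      rcases hx with rfl | hx
      · exact hαi
      · rcases hx with rfl; exact hβi)
  set a : K := ⟨α, hαK⟩ with ha
  set b : K := ⟨β, hβK⟩ with hb
  -- the element `α + c β` inside `K`
  set x : ℤ → K := fun c => a + (c : K) * b with hx
  have hxval : ∀ c : ℤ, ((x c : K) : ℂ) = α + (c : ℂ) * β := by
    intro c; push_cast [hx, ha, hb]; ring
  -- criterion for being a primitive element
  have crit : ∀ c : ℤ,
      Function.Injective (fun φ : K →ₐ[ℚ] ℂ => φ (x c)) →
      IntermediateField.adjoin ℚ {α, β} =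
        IntermediateField.adjoin ℚ {α + (c : ℂ) * β} := by
    intro c hinj
    have h1 : IntermediateField.adjoin ℚ {x c} = ⊤ :=
      (Field.primitive_element_iff_algHom_eq_of_eval' ℚ ℂ
        (fun y => IsAlgClosed.splits _) (x c)).mpr hinj
    have h2 : IntermediateField.lift (IntermediateField.adjoin ℚ ({x c} : Set K)) =
        IntermediateField.lift (F := K) ⊤ := by congr 1
    rw [IntermediateField.lift_adjoin, IntermediateField.lift_top,
      Set.image_singleton] at h2
    rw [hxval c] at h2
    exact h2.symm
  -- roots of the minimal polynomials
  have hroot : ∀ (φ : K →ₐ[ℚ] ℂ) (γ : ℂ) (g : K), ((g : K) : ℂ) = γ →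
      IsIntegral ℚ γ → φ g ∈ (minpoly ℚ γ).rootSet ℂ := by
    intro φ γ g hg hγ
    rw [Polynomial.mem_rootSet]
    refine ⟨minpoly.ne_zero hγ, ?_⟩
    have hmin : minpoly ℚ γ = minpoly ℚ g := by
      rw [← hg]
      exact minpoly.algebraMap_eq (algebraMap K ℂ).injective g
    rw [hmin, Polynomial.aeval_algHom_apply, minpoly.aeval, map_zero]
  by_contra hcon
  push_neg at hcon
  set B : ℤ := (m : ℤ) ^ 2 * (n : ℤ) ^ 2 + 1 with hB
  set T : Finset ℤ := Finset.Icc 1 B with hT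
  have key : ∀ c : T, ∃ φ ψ : K →ₐ[ℚ] ℂ, φ (x c) = ψ (x c) ∧ φ ≠ ψ := by
    rintro ⟨c, hc⟩
    rw [hT, Finset.mem_Icc] at hc
    have hne := hcon c hc.1 hc.2
    have : ¬ Function.Injective (fun φ : K →ₐ[ℚ] ℂ => φ (x c)) := fun h => hne (crit c h)
    rw [Function.not_injective_iff] at this
    obtain ⟨φ, ψ, h1, h2⟩ := this
    exact ⟨φ, ψ, h1, h2⟩
  choose φ ψ heq hne using key
  set f : T → (((minpoly ℚ α).rootSet ℂ) × ((minpoly ℚ β).rootSet ℂ)) ×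
      (((minpoly ℚ α).rootSet ℂ) × ((minpoly ℚ β).rootSet ℂ)) := fun c =>
    ((⟨φ c a, hroot (φ c) α a rfl hαi⟩, ⟨φ c b, hroot (φ c) β b rfl hβi⟩),
     (⟨ψ c a, hroot (ψ c) α a rfl hαi⟩, ⟨ψ c b, hroot (ψ c) β b rfl hβi⟩)) with hf
  have hext : ∀ c : T, φ c a = ψ c a → φ c b = ψ c b → φ c = ψ c := by
    intro c h1 h2
    refine adjoin_algHom_ext ℚ ?_
    rintro y (rfl | hy)
    · exact h1
    · rcases hy with rfl; exact h2
  have hinjf : Function.Injective f := by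
    intro c d hcd
    rw [hf] at hcd
    simp only [Prod.mk.injEq, Subtype.mk.injEq] at hcd
    obtain ⟨⟨e1, e2⟩, e3, e4⟩ := hcd
    by_contra hcdne
    have hcne : ((c : ℤ) : ℂ) ≠ ((d : ℤ) : ℂ) := by
      intro h
      exact hcdne (Subtype.ext (by exact_mod_cast h))
    -- expand the two equalities
    have E1 : φ c a + (c : ℤ) * φ c b = ψ c a + (c : ℤ) * ψ c b := by
      have := heq c
      simpa only [hx, map_add, map_mul, map_intCast] using this
    have E2 : φ d a + (d : ℤ) * φ d b = ψ d a + (d : ℤ) * ψ d b := by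
      have := heq d
      simpa only [hx, map_add, map_mul, map_intCast] using this
    rw [← e1, ← e2, ← e3, ← e4] at E2
    have hb' : φ c b = ψ c b := by
      have h5 : ((c : ℤ) - (d : ℤ) : ℂ) * (φ c b - ψ c b) = 0 := by
        linear_combination E1 - E2
      rcases mul_eq_zero.mp h5 with h | h
      · exact absurd (sub_eq_zero.mp h) hcne
      · exact sub_eq_zero.mp h
    have ha' : φ c a = ψ c a := by
      have h6 := E1
      rw [hb'] at h6
      exact add_right_cancel h6
    exact hne c (hext c ha' hb')
  have hcard := Fintype.card_le_of_injective f hinjf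
  have hcardT : Fintype.card T = m ^ 2 * n ^ 2 + 1 := by
    rw [Fintype.card_coe, hT, Int.card_Icc]
    have h7 : B + 1 - 1 = ((m ^ 2 * n ^ 2 + 1 : ℕ) : ℤ) := by rw [hB]; push_cast; ring
    rw [h7, Int.toNat_natCast]
  have hsepα : (minpoly ℚ α).Separable := (minpoly.irreducible hαi).separable
  have hsepβ : (minpoly ℚ β).Separable := (minpoly.irreducible hβi).separable
  have hcardRα : Fintype.card ((minpoly ℚ α).rootSet ℂ) = m := by
    rw [Polynomial.card_rootSet_eq_natDegree hsepα (IsAlgClosed.splits _), hm]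
  have hcardRβ : Fintype.card ((minpoly ℚ β).rootSet ℂ) = n := by
    rw [Polynomial.card_rootSet_eq_natDegree hsepβ (IsAlgClosed.splits _), hn]
  rw [hcardT] at hcard
  simp only [Fintype.card_prod, hcardRα, hcardRβ] at hcard
  nlinarith [hcard]
end

section
/- Let s be a positive integer, let k ≤ s, and let a_1,…,a_k be pairwise coprime positive integers and d_1,…,d_k positive integers, all of magnitude at most 2^s, such that for each i the polynomial X^{d_i} − a_i is irreducible over ℚ. Let d = lcm(d_1,…,d_k), ζ_d = e^{2πi/d}, and K = ℚ(d_1√a_1, …, d_k√a_k, ζ_d). Then there exist nonnegative integers c_0, c_1, …, c_k, each at most 2^{4s²}, such that θ = c_0 ζ_d + Σ_{i=1}^k c_i · d_i√a_i is a primitive element of K, i.e. K = ℚ(θ); moreover the degree of θ over ℚ is at most 2^{2s²}. -/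
open Polynomial IntermediateField

lemma aux_adjoin_range_findim {m : ℕ} (g : Fin m → ℂ) (e : Fin m → ℕ)
    (hint : ∀ j, IsIntegral ℚ (g j))
    (hdeg : ∀ j, (minpoly ℚ (g j)).natDegree ≤ e j) :
    FiniteDimensional ℚ (IntermediateField.adjoin ℚ (Set.range g)) ∧
      Module.finrank ℚ (IntermediateField.adjoin ℚ (Set.range g)) ≤ ∏ j, e j := by
  induction m with
  | zero =>
      rw [Set.range_eq_empty, IntermediateField.adjoin_empty]
      refine ⟨inferInstance, ?_⟩
      simp [IntermediateField.finrank_bot]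
  | succ m ih =>
      have hrange : Set.range g = insert (g 0) (Set.range (Fin.tail g)) :=
        Fin.range_fin_succ g
      rw [hrange, Set.insert_eq, IntermediateField.adjoin_union]
      obtain ⟨ihfd, ihle⟩ := ih (Fin.tail g) (Fin.tail e)
        (fun j => hint j.succ) (fun j => hdeg j.succ)
      haveI := ihfd
      haveI : FiniteDimensional ℚ (IntermediateField.adjoin ℚ {g 0}) :=
        IntermediateField.adjoin.finiteDimensional (hint 0)
      refine ⟨IntermediateField.finiteDimensional_sup _ _, ?_⟩
      calc Module.finrank ℚ ↥(IntermediateField.adjoin ℚ {g 0} ⊔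
              IntermediateField.adjoin ℚ (Set.range (Fin.tail g)))
          ≤ Module.finrank ℚ (IntermediateField.adjoin ℚ {g 0}) *
              Module.finrank ℚ (IntermediateField.adjoin ℚ (Set.range (Fin.tail g))) :=
            IntermediateField.finrank_sup_le _ _
        _ ≤ e 0 * ∏ j : Fin m, e j.succ := by
            refine Nat.mul_le_mul ?_ ihle
            rw [IntermediateField.adjoin.finrank (hint 0)]
            exact hdeg 0
        _ = ∏ j, e j := (Fin.prod_univ_succ e).symm

set_option maxHeartbeats 2000000 in
set_option synthInstance.maxHeartbeats 400000 in
/-- For the field `K = ℚ(ᵈ¹√a₁, …, ᵈᵏ√a_k, ζ_d)` with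
`d = lcm(d₁,…,d_k)` and all data of magnitude at most `2^s`, `k ≤ s`, there is a
primitive element `θ = c₀ζ_d + Σᵢ cᵢ ᵈⁱ√aᵢ` with nonnegative integer coefficients
`cᵢ ≤ 2^(4s²)`, whose degree over `ℚ` is at most `2^(2s²)`. -/
theorem primitive_element_of_radical_field
    (s : ℕ) (hs : 0 < s) (k : ℕ) (hk : k ≤ s)
    (a d : Fin k → ℕ)
    (ha : ∀ i, 0 < a i) (hd : ∀ i, 0 < d i)
    (hab : ∀ i, a i ≤ 2 ^ s) (hdb : ∀ i, d i ≤ 2 ^ s)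
    (hcop : ∀ i j, i ≠ j → Nat.Coprime (a i) (a j))
    (hirr : ∀ i, Irreducible (X ^ (d i) - C ((a i : ℚ))))
    (D : ℕ) (hD : D = Finset.univ.lcm d)
    (ζ : ℂ) (hζ : ζ = Complex.exp (2 * Real.pi * Complex.I / (D : ℂ)))
    (K : IntermediateField ℚ ℂ)
    (hK : K = IntermediateField.adjoin ℚ
      ((Set.range fun i : Fin k => (((a i : ℝ) ^ ((d i : ℝ)⁻¹) : ℝ) : ℂ)) ∪ {ζ})) :
    ∃ (c₀ : ℕ) (c : Fin k → ℕ),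
      c₀ ≤ 2 ^ (4 * s ^ 2) ∧ (∀ i, c i ≤ 2 ^ (4 * s ^ 2)) ∧
      IntermediateField.adjoin ℚ
          {(c₀ : ℂ) * ζ + ∑ i : Fin k, (c i : ℂ) * (((a i : ℝ) ^ ((d i : ℝ)⁻¹) : ℝ) : ℂ)} = K ∧
      (minpoly ℚ ((c₀ : ℂ) * ζ +
          ∑ i : Fin k, (c i : ℂ) * (((a i : ℝ) ^ ((d i : ℝ)⁻¹) : ℝ) : ℂ))).natDegree
        ≤ 2 ^ (2 * s ^ 2) := by
  classical
  set α : Fin k → ℂ := fun i : Fin k => (((a i : ℝ) ^ ((d i : ℝ)⁻¹) : ℝ) : ℂ) with hαdef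
  -- basic facts about the radicals
  have hαpow : ∀ i, α i ^ d i = (a i : ℂ) := by
    intro i
    rw [hαdef]
    rw [show ((((a i : ℝ) ^ ((d i : ℝ)⁻¹) : ℝ) : ℂ)) ^ d i
        = ((((a i : ℝ) ^ ((d i : ℝ)⁻¹)) ^ d i : ℝ) : ℂ) by push_cast; ring]
    rw [Real.rpow_inv_natCast_pow (by positivity) (hd i).ne']
    push_cast; ring
  have hmonic : ∀ i, (X ^ (d i) - C ((a i : ℚ))).Monic := fun i =>
    monic_X_pow_sub_C _ (hd i).ne'
  have haev : ∀ i, (Polynomial.aeval (α i)) (X ^ (d i) - C ((a i : ℚ))) = 0 := by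
    intro i
    simp [sub_eq_zero, hαpow i]
  have hαint : ∀ i, IsIntegral ℚ (α i) := fun i =>
    ⟨_, hmonic i, by rw [← Polynomial.aeval_def]; exact haev i⟩
  have hdegα : ∀ i, (minpoly ℚ (α i)).natDegree = d i := by
    intro i
    rw [← minpoly.eq_of_irreducible_of_monic (hirr i) (haev i) (hmonic i)]
    exact natDegree_X_pow_sub_C
  -- facts about D and ζ
  have hDdvd : D ∣ ∏ i, d i :=
    hD ▸ Finset.lcm_dvd fun i _ => Finset.dvd_prod_of_mem d (Finset.mem_univ i)
  have hprodpos : 0 < ∏ i, d i := Finset.prod_pos fun i _ => hd i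
  have hDpos : 0 < D := by
    rcases Nat.eq_zero_or_pos D with h | h
    · rw [h] at hDdvd
      exact absurd (Nat.eq_zero_of_zero_dvd hDdvd) hprodpos.ne'
    · exact h
  have hD0 : (D : ℂ) ≠ 0 := Nat.cast_ne_zero.mpr hDpos.ne'
  have hζpow : ζ ^ D = 1 := by
    have h1 : (D : ℂ) * (2 * Real.pi * Complex.I / (D : ℂ)) = 2 * Real.pi * Complex.I := by
      field_simp
    rw [hζ, ← Complex.exp_nat_mul, h1]
    exact Complex.exp_two_pi_mul_I
  have hζmonic : (X ^ D - C (1 : ℚ)).Monic := monic_X_pow_sub_C _ hDpos.ne'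
  have hζaev : (Polynomial.aeval ζ) (X ^ D - C (1 : ℚ)) = 0 := by
    simp [sub_eq_zero, hζpow]
  have hζint : IsIntegral ℚ ζ := ⟨_, hζmonic, by rw [← Polynomial.aeval_def]; exact hζaev⟩
  have hζdeg : (minpoly ℚ ζ).natDegree ≤ D := by
    calc (minpoly ℚ ζ).natDegree ≤ (X ^ D - C (1 : ℚ)).natDegree :=
          natDegree_le_natDegree (minpoly.min ℚ ζ hζmonic hζaev)
      _ = D := natDegree_X_pow_sub_C
  -- the generators
  set g : Fin (k + 1) → ℂ := Fin.cons ζ α with hgdef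
  have hg0 : g 0 = ζ := by rw [hgdef]; exact Fin.cons_zero _ _
  have hgs : ∀ i : Fin k, g i.succ = α i := fun i => by rw [hgdef]; exact Fin.cons_succ _ _ _
  have hKg : K = IntermediateField.adjoin ℚ (Set.range g) := by
    rw [hK, hgdef, Fin.range_cons, Set.union_singleton]
  have hgint : ∀ j, IsIntegral ℚ (g j) := by
    intro j
    induction j using Fin.cases with
    | zero => rw [hg0]; exact hζint
    | succ i => rw [hgs i]; exact hαint i
  set e : Fin (k + 1) → ℕ := Fin.cons D d with hedef
  have hgdeg : ∀ j, (minpoly ℚ (g j)).natDegree ≤ e j := by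
    intro j
    induction j using Fin.cases with
    | zero => rw [hg0, hedef]; simpa using hζdeg
    | succ i => rw [hgs i, hedef]; simp [hdegα i]
  obtain ⟨hfdK', hrankK'⟩ := aux_adjoin_range_findim g e hgint hgdeg
  haveI hfdK : FiniteDimensional ℚ K := by rw [hKg]; exact hfdK'
  -- the dimension bound
  set n := Module.finrank ℚ K with hn
  have hprodd : ∏ i, d i ≤ 2 ^ (s ^ 2) := by
    calc ∏ i, d i ≤ ∏ _i : Fin k, 2 ^ s := Finset.prod_le_prod' fun i _ => hdb i
      _ = 2 ^ (s * k) := by rw [Finset.prod_const, Finset.card_univ, Fintype.card_fin, ← pow_mul]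
      _ ≤ 2 ^ (s ^ 2) := Nat.pow_le_pow_right (by norm_num) (by nlinarith)
  have hnle : n ≤ 2 ^ (2 * s ^ 2) := by
    have h1 : n ≤ ∏ j, e j := by rw [hn, hKg]; exact hrankK'
    have h2 : ∏ j, e j = D * ∏ i, d i := by rw [hedef]; exact Fin.prod_cons D d
    have h3 : D ≤ 2 ^ (s ^ 2) := le_trans (Nat.le_of_dvd hprodpos hDdvd) hprodd
    calc n ≤ D * ∏ i, d i := h2 ▸ h1
      _ ≤ 2 ^ (s ^ 2) * 2 ^ (s ^ 2) := Nat.mul_le_mul h3 hprodd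
      _ = 2 ^ (2 * s ^ 2) := by ring
  -- embeddings
  have hcard : Fintype.card (K →ₐ[ℚ] ℂ) = n := AlgHom.card ℚ K ℂ
  have hgmem : ∀ j, g j ∈ K := by
    intro j
    rw [hKg]
    exact IntermediateField.subset_adjoin _ _ (Set.mem_range_self j)
  set gK : Fin (k + 1) → K := fun j => ⟨g j, hgmem j⟩ with hgKdef
  set N := 2 ^ (4 * s ^ 2) with hNdef
  set Θ : (Fin (k + 1) → Fin (N + 1)) → K :=
    fun c => ∑ j, (((c j : ℕ) : K)) * gK j with hΘdef
  have hexp : ∀ (σ : K →ₐ[ℚ] ℂ) (c : Fin (k + 1) → Fin (N + 1)),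
      σ (Θ c) = ∑ j, (((c j : ℕ) : ℂ)) * σ (gK j) := by
    intro σ c
    rw [hΘdef]
    rw [map_sum]
    refine Finset.sum_congr rfl fun j _ => ?_
    rw [map_mul, map_natCast]
  -- separation of embeddings by generators
  have keyA : ∀ σ τ : K →ₐ[ℚ] ℂ, (∀ j, σ (gK j) = τ (gK j)) → σ = τ := by
    intro σ τ h
    apply IntermediateField.algHom_ext_of_eq_adjoin ℚ hKg
    intro x hx
    obtain ⟨j, rfl⟩ := hx
    exact h j
  -- counting bad tuples for a fixed pair of distinct embeddings
  have keyB : ∀ σ τ : K →ₐ[ℚ] ℂ, σ ≠ τ →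
      (Finset.univ.filter
        (fun c : Fin (k + 1) → Fin (N + 1) => σ (Θ c) = τ (Θ c))).card ≤ (N + 1) ^ k := by
    intro σ τ hne
    obtain ⟨j, hj⟩ : ∃ j, σ (gK j) ≠ τ (gK j) := by
      by_contra h
      push_neg at h
      exact hne (keyA σ τ h)
    have hzero : ∀ b : Fin (k + 1) → Fin (N + 1), σ (Θ b) = τ (Θ b) →
        ∑ j', (((b j' : ℕ) : ℂ)) * (σ (gK j') - τ (gK j')) = 0 := by
      intro b hb
      have h1 := hexp σ b
      have h2 := hexp τ b
      calc ∑ j', (((b j' : ℕ) : ℂ)) * (σ (gK j') - τ (gK j'))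
          = (∑ j', (((b j' : ℕ) : ℂ)) * σ (gK j'))
            - ∑ j', (((b j' : ℕ) : ℂ)) * τ (gK j') := by
            rw [← Finset.sum_sub_distrib]
            exact Finset.sum_congr rfl fun j' _ => by ring
        _ = σ (Θ b) - τ (Θ b) := by rw [h1, h2]
        _ = 0 := by rw [hb, sub_self]
    have hinj : Set.InjOn (fun (c : Fin (k + 1) → Fin (N + 1)) (i : Fin k) => c (j.succAbove i))
        ↑(Finset.univ.filter
          (fun c : Fin (k + 1) → Fin (N + 1) => σ (Θ c) = τ (Θ c))) := by
      intro c hc c' hc' hF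
      simp only [Finset.coe_filter, Set.mem_setOf_eq, Finset.mem_univ, true_and] at hc hc'
      have hagree : ∀ i, i ≠ j → c i = c' i := by
        intro i hi
        obtain ⟨i', rfl⟩ := Fin.exists_succAbove_eq hi
        exact congrFun hF i'
      have h3 : ∑ j', ((((c j' : ℕ) : ℂ)) - (((c' j' : ℕ) : ℂ))) * (σ (gK j') - τ (gK j'))
          = 0 := by
        have h1 := hzero c hc
        have h2 := hzero c' hc'
        calc ∑ j', ((((c j' : ℕ) : ℂ)) - (((c' j' : ℕ) : ℂ))) * (σ (gK j') - τ (gK j'))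
            = (∑ j', (((c j' : ℕ) : ℂ)) * (σ (gK j') - τ (gK j')))
              - ∑ j', (((c' j' : ℕ) : ℂ)) * (σ (gK j') - τ (gK j')) := by
              rw [← Finset.sum_sub_distrib]
              exact Finset.sum_congr rfl fun j' _ => by ring
          _ = 0 := by rw [h1, h2, sub_self]
      rw [Finset.sum_eq_single j] at h3
      · rcases mul_eq_zero.mp h3 with h4 | h4
        · have h5 : ((c j : ℕ) : ℂ) = ((c' j : ℕ) : ℂ) := sub_eq_zero.mp h4
          have h6 : c j = c' j := Fin.ext (Nat.cast_injective h5)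
          funext i
          by_cases hij : i = j
          · rw [hij]; exact h6
          · exact hagree i hij
        · exact absurd (sub_eq_zero.mp h4) hj
      · intro i _ hij
        rw [hagree i hij, sub_self, zero_mul]
      · intro h
        exact absurd (Finset.mem_univ j) h
    calc (Finset.univ.filter
          (fun c : Fin (k + 1) → Fin (N + 1) => σ (Θ c) = τ (Θ c))).card
        ≤ (Finset.univ : Finset (Fin k → Fin (N + 1))).card :=
          Finset.card_le_card_of_injOn _ (fun c _ => Finset.mem_univ _) hinj
      _ = (N + 1) ^ k := by
          rw [Finset.card_univ, Fintype.card_fun, Fintype.card_fin, Fintype.card_fin]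
  -- total count of bad tuples
  set BadAll : Finset (Fin (k + 1) → Fin (N + 1)) :=
    Finset.univ.filter
      (fun c => ∃ σ τ : K →ₐ[ℚ] ℂ, σ ≠ τ ∧ σ (Θ c) = τ (Θ c)) with hBadAlldef
  have hBadcard : BadAll.card ≤ n ^ 2 * (N + 1) ^ k := by
    have hsub : BadAll ⊆ (Finset.univ : Finset ((K →ₐ[ℚ] ℂ) × (K →ₐ[ℚ] ℂ))).biUnion
        (fun p => Finset.univ.filter
          (fun c : Fin (k + 1) → Fin (N + 1) => p.1 ≠ p.2 ∧ p.1 (Θ c) = p.2 (Θ c))) := by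
      intro c hc
      rw [hBadAlldef, Finset.mem_filter] at hc
      obtain ⟨-, σ, τ, h1, h2⟩ := hc
      exact Finset.mem_biUnion.mpr ⟨(σ, τ), Finset.mem_univ _,
        Finset.mem_filter.mpr ⟨Finset.mem_univ _, h1, h2⟩⟩
    calc BadAll.card
        ≤ ((Finset.univ : Finset ((K →ₐ[ℚ] ℂ) × (K →ₐ[ℚ] ℂ))).biUnion
          (fun p => Finset.univ.filter
            (fun c : Fin (k + 1) → Fin (N + 1) =>
              p.1 ≠ p.2 ∧ p.1 (Θ c) = p.2 (Θ c)))).card := Finset.card_le_card hsub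
      _ ≤ ∑ p : (K →ₐ[ℚ] ℂ) × (K →ₐ[ℚ] ℂ),
            (Finset.univ.filter
              (fun c : Fin (k + 1) → Fin (N + 1) =>
                p.1 ≠ p.2 ∧ p.1 (Θ c) = p.2 (Θ c))).card := Finset.card_biUnion_le
      _ ≤ ∑ _p : (K →ₐ[ℚ] ℂ) × (K →ₐ[ℚ] ℂ), (N + 1) ^ k := by
          refine Finset.sum_le_sum fun p _ => ?_
          by_cases hp : p.1 = p.2
          · have hempty : (Finset.univ.filter
                (fun c : Fin (k + 1) → Fin (N + 1) =>
                  p.1 ≠ p.2 ∧ p.1 (Θ c) = p.2 (Θ c))) = ∅ :=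
              Finset.filter_false_of_mem (fun c _ => by simp [hp])
            rw [hempty]
            simp
          · refine le_trans (Finset.card_le_card ?_) (keyB p.1 p.2 hp)
            intro c hcmem
            rw [Finset.mem_filter] at hcmem ⊢
            exact ⟨hcmem.1, hcmem.2.2⟩
      _ = n ^ 2 * (N + 1) ^ k := by
          rw [Finset.sum_const, smul_eq_mul, Finset.card_univ, Fintype.card_prod, hcard, sq]
  -- a good tuple exists
  obtain ⟨c, hcgood⟩ : ∃ c : Fin (k + 1) → Fin (N + 1), c ∉ BadAll := by
    by_contra hcon
    push_neg at hcon
    have h1 : (Finset.univ : Finset (Fin (k + 1) → Fin (N + 1))) ⊆ BadAll :=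
      fun x _ => hcon x
    have h2 := Finset.card_le_card h1
    rw [Finset.card_univ, Fintype.card_fun, Fintype.card_fin, Fintype.card_fin] at h2
    have h3 : n ^ 2 < N + 1 := by
      have : n ^ 2 ≤ (2 ^ (2 * s ^ 2)) ^ 2 := Nat.pow_le_pow_left hnle 2
      rw [hNdef]
      calc n ^ 2 ≤ (2 ^ (2 * s ^ 2)) ^ 2 := this
        _ = 2 ^ (4 * s ^ 2) := by rw [← pow_mul]; ring_nf
        _ < 2 ^ (4 * s ^ 2) + 1 := Nat.lt_succ_self _
    have h4 : (N + 1) ^ (k + 1) ≤ n ^ 2 * (N + 1) ^ k := le_trans h2 hBadcard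
    have hpow : 0 < (N + 1) ^ k := Nat.pow_pos (Nat.succ_pos N)
    have h5 : n ^ 2 * (N + 1) ^ k < (N + 1) ^ (k + 1) := by
      calc n ^ 2 * (N + 1) ^ k = (N + 1) ^ k * n ^ 2 := mul_comm _ _
        _ < (N + 1) ^ k * (N + 1) := mul_lt_mul_of_pos_left h3 hpow
        _ = (N + 1) ^ (k + 1) := (pow_succ _ _).symm
    exact Nat.lt_irrefl _ (lt_of_le_of_lt h4 h5)
  have hsep : ∀ σ τ : K →ₐ[ℚ] ℂ, σ (Θ c) = τ (Θ c) → σ = τ := by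
    intro σ τ h
    by_contra hne
    exact hcgood (Finset.mem_filter.mpr ⟨Finset.mem_univ _, σ, τ, hne, h⟩)
  -- the primitive element
  set θK : K := Θ c with hθKdef
  have hθint : IsIntegral ℚ θK := Algebra.IsIntegral.isIntegral θK
  have hinjθ : Function.Injective (fun σ : K →ₐ[ℚ] ℂ => σ θK) := fun σ τ h => hsep σ τ h
  have hroots : n ≤ (minpoly ℚ θK).natDegree := by
    have hp0 : minpoly ℚ θK ≠ 0 := minpoly.ne_zero hθint
    have hpm0 : (minpoly ℚ θK).map (algebraMap ℚ ℂ) ≠ 0 :=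
      Polynomial.map_ne_zero hp0
    have hmem : ∀ σ : K →ₐ[ℚ] ℂ,
        σ θK ∈ ((minpoly ℚ θK).map (algebraMap ℚ ℂ)).roots.toFinset := by
      intro σ
      refine Multiset.mem_toFinset.mpr (Polynomial.mem_roots'.mpr ⟨hpm0, ?_⟩)
      rw [Polynomial.IsRoot.def, Polynomial.eval_map, ← Polynomial.aeval_def,
        Polynomial.aeval_algHom_apply, minpoly.aeval, map_zero]
    calc n = Fintype.card (K →ₐ[ℚ] ℂ) := hcard.symm
      _ = (Finset.univ.image (fun σ : K →ₐ[ℚ] ℂ => σ θK)).card := by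
          rw [Finset.card_image_of_injective _ hinjθ, Finset.card_univ]
      _ ≤ ((minpoly ℚ θK).map (algebraMap ℚ ℂ)).roots.toFinset.card := by
          refine Finset.card_le_card fun x hx => ?_
          obtain ⟨σ, -, rfl⟩ := Finset.mem_image.mp hx
          exact hmem σ
      _ ≤ Multiset.card ((minpoly ℚ θK).map (algebraMap ℚ ℂ)).roots :=
          Multiset.toFinset_card_le _
      _ ≤ ((minpoly ℚ θK).map (algebraMap ℚ ℂ)).natDegree := Polynomial.card_roots' _
      _ = (minpoly ℚ θK).natDegree := Polynomial.natDegree_map _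
  -- express θ as a complex number
  have hθc : K.val θK
      = ((c 0 : ℕ) : ℂ) * ζ + ∑ i : Fin k, (((c i.succ : ℕ)) : ℂ) * α i := by
    have hvalg : ∀ j, K.val (gK j) = g j := fun _ => rfl
    rw [hθKdef]; refine (hexp K.val c).trans ?_
    show ∑ j, (((c j : ℕ) : ℂ)) * g j = _
    rw [Fin.sum_univ_succ]
    simp only [hvalg, hg0, hgs]
  have hvalmem : K.val θK ∈ K := θK.2
  have hKvalinj : Function.Injective (K.val : K →ₐ[ℚ] ℂ) := fun x y h => Subtype.ext h
  have hintval : IsIntegral ℚ (K.val θK) := (isIntegral_algHom_iff K.val hKvalinj).mpr hθint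
  have hminval : minpoly ℚ (K.val θK) = minpoly ℚ θK := minpoly.algHom_eq K.val hKvalinj θK
  have h1 : IntermediateField.adjoin ℚ {K.val θK} ≤ K :=
    IntermediateField.adjoin_le_iff.mpr (Set.singleton_subset_iff.mpr hvalmem)
  have h2 : Module.finrank ℚ K ≤
      Module.finrank ℚ (IntermediateField.adjoin ℚ {K.val θK}) := by
    rw [IntermediateField.adjoin.finrank hintval, hminval]
    exact hroots
  have h3 : IntermediateField.adjoin ℚ {K.val θK} = K :=
    IntermediateField.eq_of_le_of_finrank_le h1 h2
  have h4 : (minpoly ℚ (K.val θK)).natDegree ≤ 2 ^ (2 * s ^ 2) := by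
    have h5 : (minpoly ℚ (K.val θK)).natDegree
        = Module.finrank ℚ (IntermediateField.adjoin ℚ {K.val θK}) :=
      (IntermediateField.adjoin.finrank hintval).symm
    rw [h5, h3, ← hn]
    exact hnle
  refine ⟨(c 0 : ℕ), fun i => ((c i.succ : ℕ)), Fin.is_le _, fun i => Fin.is_le _, ?_, ?_⟩
  · show IntermediateField.adjoin ℚ
        {((c 0 : ℕ) : ℂ) * ζ + ∑ i : Fin k, (((c i.succ : ℕ)) : ℂ) * α i} = K
    rw [← hθc]
    exact h3
  · show (minpoly ℚ (((c 0 : ℕ) : ℂ) * ζ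
        + ∑ i : Fin k, (((c i.succ : ℕ)) : ℂ) * α i)).natDegree ≤ 2 ^ (2 * s ^ 2)
    rw [← hθc]
    exact h4
end

section
/- Let p_1, …, p_s be distinct rational primes, f_1, …, f_s positive integers, and m = ∏_{l=1}^s p_l^{f_l}. Let d and e be positive integers. Then the positive real number m^{e/d} (the e-th power of the positive real d-th root of m) is a rational integer if and only if d divides e · gcd(f_1, …, f_s). -/
/-- Let `m = ∏ l, p_l ^ f_l` with `p_1,…,p_s` distinct primes and
`f_l` positive, and let `d, e` be positive integers. The positive real number
`m^(e/d) = (ᵈ√m)^e` is a rational integer iff `d ∣ e * gcd(f_1,…,f_s)`. -/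
theorem radical_power_integer_iff
    (s : ℕ) (hs : 0 < s)
    (p : Fin s → ℕ) (hp : ∀ l, (p l).Prime) (hinj : Function.Injective p)
    (f : Fin s → ℕ) (hf : ∀ l, 0 < f l)
    (m : ℕ) (hm : m = ∏ l : Fin s, p l ^ f l)
    (d e : ℕ) (hd : 0 < d) (he : 0 < e) :
    (∃ n : ℤ, ((m : ℝ) ^ ((d : ℝ)⁻¹)) ^ e = (n : ℝ)) ↔
      d ∣ e * Finset.univ.gcd f := by
  have hm0 : 0 < m := by
    rw [hm]
    exact Finset.prod_pos fun l _ => pow_pos (hp l).pos _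
  have hmR : (0:ℝ) ≤ (m:ℝ) := by positivity
  have hx : ((m : ℝ) ^ ((d : ℝ)⁻¹)) ^ e = ((m:ℝ)^e) ^ ((d:ℝ)⁻¹) := by
    rw [← Real.rpow_natCast ((m:ℝ) ^ ((d:ℝ)⁻¹)) e, ← Real.rpow_natCast (m:ℝ) e,
      ← Real.rpow_mul hmR, ← Real.rpow_mul hmR, mul_comm]
  have hfact : ∀ l, m.factorization (p l) = f l := by
    intro l
    rw [hm, Nat.factorization_prod (fun i _ => pow_ne_zero _ (hp i).pos.ne')]
    rw [Finsupp.finset_sum_apply]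
    have : ∀ i : Fin s, ((p i ^ f i).factorization) (p l)
        = if i = l then f i else 0 := by
      intro i
      rw [(hp i).factorization_pow, Finsupp.single_apply]
      simp [hinj.eq_iff]
    rw [Finset.sum_congr rfl fun i _ => this i]
    simp
  constructor
  · rintro ⟨n, hn⟩
    have hxpos : (0:ℝ) < ((m : ℝ) ^ ((d : ℝ)⁻¹)) ^ e := by positivity
    have hn0 : 0 < n := by exact_mod_cast hn ▸ hxpos
    set N : ℕ := n.toNat with hNdef
    have hNR : (N:ℝ) = ((m : ℝ) ^ ((d : ℝ)⁻¹)) ^ e := by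
      rw [hn]; exact_mod_cast congrArg Int.cast (Int.toNat_of_nonneg hn0.le)
    have hNd : (N:ℝ) ^ d = (m:ℝ) ^ e := by
      rw [hNR, hx, Real.rpow_inv_natCast_pow (by positivity) hd.ne']
    have hNnat : N ^ d = m ^ e := by exact_mod_cast hNd
    have hkey : ∀ l, d ∣ e * f l := by
      intro l
      have := congrArg (fun k => k.factorization (p l)) hNnat
      simp only [Nat.factorization_pow, Finsupp.smul_apply, smul_eq_mul] at this
      rw [hfact l] at this
      exact ⟨_, this.symm⟩
    have : d ∣ Finset.univ.gcd (fun l => e * f l) :=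
      Finset.dvd_gcd fun l _ => hkey l
    rw [Finset.gcd_mul_left] at this
    simpa using this
  · intro hdvd
    have hl : ∀ l, d ∣ e * f l := fun l =>
      hdvd.trans (mul_dvd_mul_left e (Finset.gcd_dvd (Finset.mem_univ l)))
    set n : ℕ := ∏ l : Fin s, p l ^ (e * f l / d) with hndef
    have hnd : n ^ d = m ^ e := by
      rw [hndef, hm, ← Finset.prod_pow, ← Finset.prod_pow]
      refine Finset.prod_congr rfl fun l _ => ?_
      rw [← pow_mul, ← pow_mul, Nat.div_mul_cancel (hl l), mul_comm (f l) e]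
    refine ⟨(n:ℤ), ?_⟩
    have hcast : ((m:ℝ)) ^ e = ((n:ℝ)) ^ d := by exact_mod_cast hnd.symm
    rw [hx, hcast, Real.pow_rpow_inv_natCast (by positivity) hd.ne']
    norm_cast
end
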